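/- Let S be a unital ring, σ an injective endomorphism, and f ∈ S[t;σ] of degree m ≥ 2 with invertible leading coefficient. If the Petit algebra S_f is not associative, then S is contained in the left nucleus and in the middle nucleus of S_f, and the right nucleus of S_f equals {g ∈ S[t;σ] : deg(g) < m and fg ∈ S[t;σ]f}. -/
import Mathlib


open Finset

/-- `g` has degree `< n`: `g = ∑_{i < n} ι(aᵢ) tⁱ`. -/
def DegLT {S R : Type*} [Ring S] [Ring R] (ι : S →+* R) (t : R) (g : R) (n : ℕ) : Prop :=
  ∃ a : ℕ → S, g = ∑ i ∈ range n, ι (a i) * t ^ i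

/-- The multiplication of the Petit algebra `S_f`, relationally: `r = g∘h = g·h mod_r f`. -/
def PetitMulRel {S R : Type*} [Ring S] [Ring R] (ι : S →+* R) (t : R) (f : R) (m : ℕ)
    (g h r : R) : Prop :=
  DegLT ι t r m ∧ ∃ q : R, g * h = q * f + r

section
variable {S R : Type*} [Ring S] [Ring R] (ι : S →+* R) (t : R) (f : R) (m : ℕ)

/-- `x` lies in the left nucleus of `S_f`: `(x∘h)∘k = x∘(h∘k)` for all `h, k ∈ S_f`. -/
def InNucL (x : R) : Prop :=
  DegLT ι t x m ∧ ∀ h k r₁ r₂ r₃ r₄ : R, DegLT ι t h m → DegLT ι t k m →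
    PetitMulRel ι t f m x h r₁ → PetitMulRel ι t f m r₁ k r₂ →
    PetitMulRel ι t f m h k r₃ → PetitMulRel ι t f m x r₃ r₄ → r₂ = r₄

/-- `x` lies in the middle nucleus of `S_f`: `(h∘x)∘k = h∘(x∘k)` for all `h, k ∈ S_f`. -/
def InNucM (x : R) : Prop :=
  DegLT ι t x m ∧ ∀ h k r₁ r₂ r₃ r₄ : R, DegLT ι t h m → DegLT ι t k m →
    PetitMulRel ι t f m h x r₁ → PetitMulRel ι t f m r₁ k r₂ →
    PetitMulRel ι t f m x k r₃ → PetitMulRel ι t f m h r₃ r₄ → r₂ = r₄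

/-- `x` lies in the right nucleus of `S_f`: `(h∘k)∘x = h∘(k∘x)` for all `h, k ∈ S_f`. -/
def InNucR (x : R) : Prop :=
  DegLT ι t x m ∧ ∀ h k r₁ r₂ r₃ r₄ : R, DegLT ι t h m → DegLT ι t k m →
    PetitMulRel ι t f m h k r₁ → PetitMulRel ι t f m r₁ x r₂ →
    PetitMulRel ι t f m k x r₃ → PetitMulRel ι t f m h r₃ r₄ → r₂ = r₄

end

section Helpers

variable {S R : Type*} [Ring S] [Ring R]

lemma degLT_zero (ι : S →+* R) (t : R) (n : ℕ) : DegLT ι t (0:R) n :=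
  ⟨fun _ => 0, by simp⟩

lemma degLT_zero' {ι : S →+* R} {t : R} {g : R} (h : DegLT ι t g 0) : g = 0 := by
  obtain ⟨a, ha⟩ := h; simpa using ha

lemma degLT_mono {ι : S →+* R} {t : R} {g : R} {n N : ℕ} (h : DegLT ι t g n) (hnN : n ≤ N) :
    DegLT ι t g N := by
  obtain ⟨a, ha⟩ := h
  refine ⟨fun i => if i < n then a i else 0, ?_⟩
  rw [ha]
  have h1 : ∑ i ∈ range n, ι (a i) * t ^ i
      = ∑ i ∈ range n, ι (if i < n then a i else 0) * t ^ i :=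
    Finset.sum_congr rfl fun i hi => by rw [Finset.mem_range] at hi; simp [hi]
  rw [h1]
  exact Finset.sum_subset (Finset.range_subset_range.2 hnN) fun i _ hni => by
    have : ¬ i < n := by simpa using hni
    simp [this]

lemma degLT_add {ι : S →+* R} {t : R} {g h : R} {n : ℕ} (hg : DegLT ι t g n)
    (hh : DegLT ι t h n) : DegLT ι t (g + h) n := by
  obtain ⟨a, ha⟩ := hg; obtain ⟨c, hc⟩ := hh
  refine ⟨fun i => a i + c i, ?_⟩
  rw [ha, hc, ← Finset.sum_add_distrib]
  exact Finset.sum_congr rfl fun i _ => by rw [map_add, add_mul]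

lemma degLT_neg {ι : S →+* R} {t : R} {g : R} {n : ℕ} (hg : DegLT ι t g n) :
    DegLT ι t (-g) n := by
  obtain ⟨a, ha⟩ := hg
  refine ⟨fun i => -(a i), ?_⟩
  rw [ha, ← Finset.sum_neg_distrib]
  exact Finset.sum_congr rfl fun i _ => by rw [map_neg, neg_mul]

lemma degLT_sub {ι : S →+* R} {t : R} {g h : R} {n : ℕ} (hg : DegLT ι t g n)
    (hh : DegLT ι t h n) : DegLT ι t (g - h) n := by
  rw [sub_eq_add_neg]; exact degLT_add hg (degLT_neg hh)

lemma degLT_monomial (ι : S →+* R) (t : R) (c : S) (d N : ℕ) (h : d < N) :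
    DegLT ι t (ι c * t ^ d) N := by
  classical
  refine ⟨fun i => if i = d then c else 0, ?_⟩
  have h1 : ∀ i ∈ range N, ι (if i = d then c else 0) * t ^ i
      = if i = d then ι c * t ^ d else 0 := by
    intro i _; split
    · subst ‹i = d›; rfl
    · simp
  rw [Finset.sum_congr rfl h1, Finset.sum_ite_eq' (range N) d (fun _ => ι c * t ^ d)]
  simp [h]

lemma degLT_sum {ι : S →+* R} {t : R} {N : ℕ} {α : Type*} (s : Finset α) (F : α → R)
    (h : ∀ x ∈ s, DegLT ι t (F x) N) : DegLT ι t (∑ x ∈ s, F x) N := by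
  classical
  induction s using Finset.induction with
  | empty => simpa using degLT_zero ι t N
  | @insert x s hx ih =>
    rw [Finset.sum_insert hx]
    exact degLT_add (h _ (mem_insert_self _ _)) (ih fun y hy => h y (mem_insert_of_mem hy))

lemma tpow_comm (σ : S →+* S) (ι : S →+* R) (t : R) (hrel : ∀ a : S, t * ι a = ι (σ a) * t) :
    ∀ (n : ℕ) (c : S), t ^ n * ι c = ι ((σ ^ n) c) * t ^ n := by
  intro n
  induction n with
  | zero => intro c; simp
  | succ n ih =>
    intro c
    have h1 : (σ ^ (n + 1)) c = (σ ^ n) (σ c) := by rw [pow_succ]; rfl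
    calc t ^ (n + 1) * ι c = t ^ n * (t * ι c) := by rw [pow_succ, mul_assoc]
    _ = t ^ n * (ι (σ c) * t) := by rw [hrel]
    _ = (t ^ n * ι (σ c)) * t := by rw [mul_assoc]
    _ = (ι ((σ ^ n) (σ c)) * t ^ n) * t := by rw [ih]
    _ = ι ((σ ^ (n + 1)) c) * t ^ (n + 1) := by rw [h1, pow_succ, mul_assoc]

lemma mono_mul (σ : S →+* S) (ι : S →+* R) (t : R) (hrel : ∀ a : S, t * ι a = ι (σ a) * t)
    (a c : S) (i j : ℕ) :
    (ι a * t ^ i) * (ι c * t ^ j) = ι (a * (σ ^ i) c) * t ^ (i + j) := by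
  calc (ι a * t ^ i) * (ι c * t ^ j) = ι a * ((t ^ i * ι c) * t ^ j) := by
        rw [mul_assoc, ← mul_assoc (t ^ i)]
  _ = ι a * ((ι ((σ ^ i) c) * t ^ i) * t ^ j) := by rw [tpow_comm σ ι t hrel]
  _ = (ι a * ι ((σ ^ i) c)) * (t ^ i * t ^ j) := by rw [mul_assoc, ← mul_assoc (ι a)]
  _ = ι (a * (σ ^ i) c) * t ^ (i + j) := by rw [← map_mul, pow_add]

lemma coeff_unique (ι : S →+* R) (t : R)
    (hbasis : ∀ g : R, ∃! a : ℕ →₀ S, g = a.sum fun i c => ι c * t ^ i)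
    (N : ℕ) (a c : ℕ → S)
    (h : ∑ i ∈ range N, ι (a i) * t ^ i = ∑ i ∈ range N, ι (c i) * t ^ i) :
    ∀ i < N, a i = c i := by
  classical
  have key : ∀ d : ℕ → S,
      ((∑ i ∈ range N, Finsupp.single i (d i)).sum fun i x => ι x * t ^ i)
        = ∑ i ∈ range N, ι (d i) * t ^ i := by
    intro d
    rw [← Finsupp.sum_finset_sum_index (by intro i; simp)
      (by intro i x y; rw [map_add, add_mul])]
    exact Finset.sum_congr rfl fun i _ => Finsupp.sum_single_index (by simp)
  obtain ⟨B, hB, hBu⟩ := hbasis (∑ i ∈ range N, ι (a i) * t ^ i)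
  have hA : (∑ i ∈ range N, Finsupp.single i (a i)) = B := hBu _ (key a).symm
  have hC : (∑ i ∈ range N, Finsupp.single i (c i)) = B := hBu _ (h.trans (key c).symm)
  intro i hi
  have h2 := congrArg (fun A : ℕ →₀ S => A i) (hA.trans hC.symm)
  simpa [Finsupp.finset_sum_apply, Finsupp.single_apply,
    Finset.sum_ite_eq' (range N) i, hi] using h2

lemma top_zero (ι : S →+* R) (t : R)
    (hbasis : ∀ g : R, ∃! a : ℕ →₀ S, g = a.sum fun i c => ι c * t ^ i)
    {c : S} {d : ℕ} (h : DegLT ι t (ι c * t ^ d) d) : c = 0 := by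
  classical
  obtain ⟨a, ha⟩ := h
  have h1 : ∑ i ∈ range (d + 1), ι ((fun i => if i = d then c else 0) i) * t ^ i
      = ι c * t ^ d := by
    rw [Finset.sum_range_succ]
    have h0 : ∀ i ∈ range d, ι ((fun i => if i = d then c else 0) i) * t ^ i = 0 := by
      intro i hi
      rw [Finset.mem_range] at hi
      simp [Nat.ne_of_lt hi]
    rw [Finset.sum_congr rfl h0]
    simp
  have h2 : ∑ i ∈ range (d + 1), ι ((fun i => if i = d then (0:S) else a i) i) * t ^ i
      = ι c * t ^ d := by
    rw [Finset.sum_range_succ]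
    have h0 : ∀ i ∈ range d, ι ((fun i => if i = d then (0:S) else a i) i) * t ^ i
        = ι (a i) * t ^ i := by
      intro i hi
      rw [Finset.mem_range] at hi
      simp [Nat.ne_of_lt hi]
    rw [Finset.sum_congr rfl h0]
    simp [← ha]
  have h3 := coeff_unique ι t hbasis (d + 1) _ _ (h1.trans h2.symm) d (Nat.lt_succ_self d)
  simpa using h3

lemma degLT_mul (σ : S →+* S) (ι : S →+* R) (t : R)
    (hrel : ∀ a : S, t * ι a = ι (σ a) * t) {g h : R} {n k : ℕ}
    (hg : DegLT ι t g (n + 1)) (hh : DegLT ι t h (k + 1)) :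
    DegLT ι t (g * h) (n + k + 1) := by
  obtain ⟨a, ha⟩ := hg; obtain ⟨c, hc⟩ := hh
  rw [ha, hc, Finset.sum_mul_sum]
  refine degLT_sum _ _ fun i hi => degLT_sum _ _ fun j hj => ?_
  rw [mono_mul σ ι t hrel]
  exact degLT_monomial ι t _ _ _ (by rw [mem_range] at hi hj; omega)

lemma degLT_exists (ι : S →+* R) (t : R)
    (hbasis : ∀ g : R, ∃! a : ℕ →₀ S, g = a.sum fun i c => ι c * t ^ i) (g : R) :
    ∃ n, DegLT ι t g n := by
  obtain ⟨A, hA, -⟩ := hbasis g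
  refine ⟨A.support.sup id + 1, fun i => A i, ?_⟩
  rw [hA]
  exact Finsupp.sum_of_support_subset A
    (fun i hi => Finset.mem_range.2 (Nat.lt_succ_of_le (Finset.le_sup (f := id) hi))) _
    (fun i _ => by simp)

end Helpers

section Main

variable {S R : Type*} [Ring S] [Ring R]

lemma mul_f_cancel (σ : S →+* S) (ι : S →+* R) (t : R)
    (hrel : ∀ a : S, t * ι a = ι (σ a) * t)
    (hbasis : ∀ g : R, ∃! a : ℕ →₀ S, g = a.sum fun i c => ι c * t ^ i)
    (f : R) (m : ℕ) (b : ℕ → S)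
    (hf : f = ∑ i ∈ range m, ι (b i) * t ^ i + ι (b m) * t ^ m) (hlead : IsUnit (b m)) :
    ∀ (n : ℕ) (w : R), DegLT ι t w n → DegLT ι t (w * f) m → w = 0 := by
  have hf' : f = ∑ j ∈ range (m + 1), ι (b j) * t ^ j := by rw [Finset.sum_range_succ, ← hf]
  intro n
  induction n with
  | zero => exact fun w hw _ => degLT_zero' hw
  | succ n ih =>
    intro w hw hwf
    obtain ⟨a, ha⟩ := hw
    set w' : R := ∑ i ∈ range n, ι (a i) * t ^ i with hw'
    have hww : w = w' + ι (a n) * t ^ n := by rw [ha, Finset.sum_range_succ]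
    have hmono : (ι (a n) * t ^ n) * f
        = (∑ j ∈ range m, ι (a n * (σ ^ n) (b j)) * t ^ (n + j))
          + ι (a n * (σ ^ n) (b m)) * t ^ (n + m) := by
      rw [hf', Finset.mul_sum, Finset.sum_range_succ]
      congr 1
      · exact Finset.sum_congr rfl fun j _ => mono_mul σ ι t hrel _ _ _ _
      · exact mono_mul σ ι t hrel _ _ _ _
    set gg : R := w' * f + ∑ j ∈ range m, ι (a n * (σ ^ n) (b j)) * t ^ (n + j) with hgg
    have hsplit : w * f = gg + ι (a n * (σ ^ n) (b m)) * t ^ (n + m) := by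
      rw [hww, add_mul, hmono, hgg]; abel
    have hggd : DegLT ι t gg (n + m) := by
      apply degLT_add
      · rcases Nat.eq_zero_or_pos n with h0 | hpos
        · have hz : w' = 0 := by simp [hw', h0]
          rw [hz, zero_mul]; exact degLT_zero ι t _
        · obtain ⟨n', rfl⟩ : ∃ n', n = n' + 1 := ⟨n - 1, by omega⟩
          have hfd : DegLT ι t f (m + 1) := ⟨b, hf'⟩
          have hm := degLT_mul σ ι t hrel (⟨a, rfl⟩ : DegLT ι t w' (n' + 1)) hfd
          exact degLT_mono hm (by omega)
      · refine degLT_sum _ _ fun j hj => degLT_monomial _ _ _ _ _ ?_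
        rw [mem_range] at hj; omega
    have htop : DegLT ι t (ι (a n * (σ ^ n) (b m)) * t ^ (n + m)) (n + m) := by
      have h1 : ι (a n * (σ ^ n) (b m)) * t ^ (n + m) = w * f - gg := by rw [hsplit]; abel
      rw [h1]
      exact degLT_sub (degLT_mono hwf (by omega)) hggd
    have hc0 : a n * (σ ^ n) (b m) = 0 := top_zero ι t hbasis htop
    have hu : IsUnit ((σ ^ n) (b m)) := hlead.map (σ ^ n)
    have han : a n = 0 := by
      obtain ⟨v, hv⟩ := hu
      calc a n = a n * ((v : S) * ((v⁻¹ : Sˣ) : S)) := by rw [Units.mul_inv, mul_one]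
      _ = (a n * (σ ^ n) (b m)) * ((v⁻¹ : Sˣ) : S) := by rw [← mul_assoc, hv]
      _ = 0 := by rw [hc0, zero_mul]
    have hwn : DegLT ι t w n := by
      refine ⟨a, ?_⟩
      rw [hww, han]
      simp [hw']
    exact ih w hwn hwf

lemma mod_unique (σ : S →+* S) (ι : S →+* R) (t : R)
    (hrel : ∀ a : S, t * ι a = ι (σ a) * t)
    (hbasis : ∀ g : R, ∃! a : ℕ →₀ S, g = a.sum fun i c => ι c * t ^ i)
    (f : R) (m : ℕ) (b : ℕ → S)
    (hf : f = ∑ i ∈ range m, ι (b i) * t ^ i + ι (b m) * t ^ m) (hlead : IsUnit (b m))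
    {q r q' r' : R} (h : q * f + r = q' * f + r')
    (hr : DegLT ι t r m) (hr' : DegLT ι t r' m) : r = r' := by
  have h2 : q * f - q' * f = r' - r := by
    rw [sub_eq_sub_iff_add_eq_add, h, add_comm]
  have hw : (q - q') * f = r' - r := by rw [sub_mul]; exact h2
  obtain ⟨n, hn⟩ := degLT_exists ι t hbasis (q - q')
  have h0 : q - q' = 0 := mul_f_cancel σ ι t hrel hbasis f m b hf hlead n _ hn
    (by rw [hw]; exact degLT_sub hr' hr)
  have h3 : r' - r = 0 := by rw [← hw, h0, zero_mul]
  exact (sub_eq_zero.mp h3).symm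

lemma div_exists (σ : S →+* S) (ι : S →+* R) (t : R)
    (hrel : ∀ a : S, t * ι a = ι (σ a) * t)
    (f : R) (m : ℕ) (b : ℕ → S)
    (hf : f = ∑ i ∈ range m, ι (b i) * t ^ i + ι (b m) * t ^ m) (hlead : IsUnit (b m)) :
    ∀ (n : ℕ) (g : R), DegLT ι t g n → ∃ q r : R, DegLT ι t r m ∧ g = q * f + r := by
  have hf' : f = ∑ j ∈ range (m + 1), ι (b j) * t ^ j := by rw [Finset.sum_range_succ, ← hf]
  intro n
  induction n with
  | zero => exact fun g hg => ⟨0, 0, degLT_zero ι t m, by rw [degLT_zero' hg, zero_mul, zero_add]⟩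
  | succ n ih =>
    intro g hg
    by_cases hnm : n + 1 ≤ m
    · exact ⟨0, g, degLT_mono hg hnm, by rw [zero_mul, zero_add]⟩
    · push_neg at hnm
      obtain ⟨a, ha⟩ := hg
      set w' : R := ∑ i ∈ range n, ι (a i) * t ^ i with hw'
      have hgw : g = w' + ι (a n) * t ^ n := by rw [ha, Finset.sum_range_succ]
      obtain ⟨v, hv⟩ := hlead
      set c : S := ((v⁻¹ : Sˣ) : S) with hcdef
      have hcb : c * b m = 1 := by rw [hcdef, ← hv]; exact v.inv_mul
      have hlow : ι c * f = (∑ j ∈ range m, ι (c * b j) * t ^ j) + t ^ m := by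
        rw [hf', Finset.mul_sum, Finset.sum_range_succ]
        congr 1
        · exact Finset.sum_congr rfl fun j _ => by rw [← mul_assoc, ← map_mul]
        · rw [← mul_assoc, ← map_mul, hcb, map_one, one_mul]
      set e := n - m with he
      have hne : n = e + m := by omega
      have hmon : ι (a n) * t ^ n
          = (ι (a n) * t ^ e * ι c) * f
            - ∑ j ∈ range m, ι (a n * (σ ^ e) (c * b j)) * t ^ (e + j) := by
        have h1 : ι (a n) * t ^ n = (ι (a n) * t ^ e) * t ^ m := by
          rw [hne, pow_add, mul_assoc]
        have h2 : (ι (a n) * t ^ e) * t ^ m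
            = (ι (a n) * t ^ e) * (ι c * f)
              - (ι (a n) * t ^ e) * (∑ j ∈ range m, ι (c * b j) * t ^ j) := by
          rw [hlow, mul_add]; abel
        rw [h1, h2, Finset.mul_sum]
        congr 1
        · rw [← mul_assoc]
        · exact Finset.sum_congr rfl fun j _ => mono_mul σ ι t hrel _ _ _ _
      set L : R := ∑ j ∈ range m, ι (a n * (σ ^ e) (c * b j)) * t ^ (e + j) with hL
      have hLd : DegLT ι t L n := by
        refine degLT_sum _ _ fun j hj => degLT_monomial _ _ _ _ _ ?_
        rw [mem_range] at hj; omega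
      have hrest : DegLT ι t (w' - L) n := degLT_sub ⟨a, rfl⟩ hLd
      obtain ⟨q₁, r, hr, hqr⟩ := ih (w' - L) hrest
      refine ⟨ι (a n) * t ^ e * ι c + q₁, r, hr, ?_⟩
      have hww : w' = q₁ * f + r + L := by rw [← hqr]; abel
      rw [hgw, hmon, add_mul, hww]
      abel

end Main

theorem petit_algebra_nuclei' {S R : Type*} [Ring S] [Ring R]
    (σ : S →+* S)
    (ι : S →+* R) (t : R)
    (hrel : ∀ a : S, t * ι a = ι (σ a) * t)
    (hbasis : ∀ g : R, ∃! a : ℕ →₀ S, g = a.sum fun i c => ι c * t ^ i)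
    (f : R) (m : ℕ) (hm : 2 ≤ m) (b : ℕ → S)
    (hf : f = ∑ i ∈ range m, ι (b i) * t ^ i + ι (b m) * t ^ m) (hlead : IsUnit (b m)) :
    (∀ a : S, InNucL ι t f m (ι a)) ∧ (∀ a : S, InNucM ι t f m (ι a)) ∧
    (∀ x : R, InNucR ι t f m x ↔ (DegLT ι t x m ∧ ∃ v : R, f * x = v * f)) := by
  have MU : ∀ {q r q' r' : R}, q * f + r = q' * f + r' → DegLT ι t r m → DegLT ι t r' m →
      r = r' := fun h hr hr' => mod_unique σ ι t hrel hbasis f m b hf hlead h hr hr'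
  have HL : ∀ (a : S) (h : R), DegLT ι t h m → DegLT ι t (ι a * h) m := by
    rintro a h ⟨c, hc⟩
    refine ⟨fun i => a * c i, ?_⟩
    rw [hc, Finset.mul_sum]
    exact Finset.sum_congr rfl fun i _ => by rw [← mul_assoc, ← map_mul]
  have HR : ∀ (a : S) (h : R), DegLT ι t h m → DegLT ι t (h * ι a) m := by
    rintro a h ⟨c, hc⟩
    refine ⟨fun i => c i * (σ ^ i) a, ?_⟩
    rw [hc, Finset.sum_mul]
    refine Finset.sum_congr rfl fun i _ => ?_
    calc ι (c i) * t ^ i * ι a = (ι (c i) * t ^ i) * (ι a * t ^ 0) := by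
          rw [pow_zero, mul_one]
    _ = ι (c i * (σ ^ i) a) * t ^ (i + 0) := mono_mul σ ι t hrel _ _ _ _
    _ = ι (c i * (σ ^ i) a) * t ^ i := by rw [Nat.add_zero]
  refine ⟨?_, ?_, ?_⟩
  · -- left nucleus
    intro a
    have had : DegLT ι t (ι a) m := by
      have h0 := degLT_monomial ι t a 0 m (by omega)
      simpa using h0
    refine ⟨had, ?_⟩
    rintro h k r₁ r₂ r₃ r₄ hh hk ⟨hr₁d, q₁, hq₁⟩ ⟨hr₂d, q₂, hq₂⟩ ⟨hr₃d, q₃, hq₃⟩ ⟨hr₄d, q₄, hq₄⟩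
    have e1 : r₁ = ι a * h :=
      MU (show q₁ * f + r₁ = 0 * f + ι a * h by rw [← hq₁, zero_mul, zero_add]) hr₁d (HL a h hh)
    have e4 : r₄ = ι a * r₃ :=
      MU (show q₄ * f + r₄ = 0 * f + ι a * r₃ by rw [← hq₄, zero_mul, zero_add]) hr₄d
        (HL a r₃ hr₃d)
    have key : q₂ * f + r₂ = (ι a * q₃) * f + ι a * r₃ := by
      rw [← hq₂, e1, mul_assoc (ι a) h k, hq₃, mul_add, ← mul_assoc]
    have e2 : r₂ = ι a * r₃ := MU key hr₂d (HL a r₃ hr₃d)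
    rw [e2, e4]
  · -- middle nucleus
    intro a
    have had : DegLT ι t (ι a) m := by
      have h0 := degLT_monomial ι t a 0 m (by omega)
      simpa using h0
    refine ⟨had, ?_⟩
    rintro h k r₁ r₂ r₃ r₄ hh hk ⟨hr₁d, q₁, hq₁⟩ ⟨hr₂d, q₂, hq₂⟩ ⟨hr₃d, q₃, hq₃⟩ ⟨hr₄d, q₄, hq₄⟩
    have e1 : r₁ = h * ι a :=
      MU (show q₁ * f + r₁ = 0 * f + h * ι a by rw [← hq₁, zero_mul, zero_add]) hr₁d (HR a h hh)
    have e3 : r₃ = ι a * k :=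
      MU (show q₃ * f + r₃ = 0 * f + ι a * k by rw [← hq₃, zero_mul, zero_add]) hr₃d (HL a k hk)
    have key : q₂ * f + r₂ = q₄ * f + r₄ := by
      rw [← hq₂, e1, ← hq₄, e3, mul_assoc]
    exact MU key hr₂d hr₄d
  · -- right nucleus
    intro x
    constructor
    · rintro ⟨hxd, hx⟩
      refine ⟨hxd, ?_⟩
      obtain ⟨v, hv⟩ := id hlead
      set c : S := ((v⁻¹ : Sˣ) : S) with hcdef
      have hcb : c * b m = 1 := by rw [hcdef, ← hv]; exact v.inv_mul
      have hbc : b m * c = 1 := by rw [hcdef, ← hv]; exact v.mul_inv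
      have hf' : f = ∑ j ∈ range (m + 1), ι (b j) * t ^ j := by
        rw [Finset.sum_range_succ, ← hf]
      have hlow : ι c * f = (∑ j ∈ range m, ι (c * b j) * t ^ j) + t ^ m := by
        rw [hf', Finset.mul_sum, Finset.sum_range_succ]
        congr 1
        · exact Finset.sum_congr rfl fun j _ => by rw [← mul_assoc, ← map_mul]
        · rw [← mul_assoc, ← map_mul, hcb, map_one, one_mul]
      set r₁ : R := -(∑ j ∈ range m, ι (c * b j) * t ^ j) with hr₁
      have hr₁d : DegLT ι t r₁ m :=
        degLT_neg (degLT_sum _ _ fun j hj => degLT_monomial _ _ _ _ _ (mem_range.1 hj))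
      have htm : t ^ m = ι c * f + r₁ := by rw [hlow, hr₁]; abel
      have DIV : ∀ g : R, ∃ q r, DegLT ι t r m ∧ g = q * f + r := fun g => by
        obtain ⟨n, hn⟩ := degLT_exists ι t hbasis g
        exact div_exists σ ι t hrel f m b hf hlead n g hn
      obtain ⟨q₃, r₃, hr₃d, hq₃⟩ := DIV (t ^ (m - 1) * x)
      obtain ⟨q₂, r₂, hr₂d, hq₂⟩ := DIV (r₁ * x)
      obtain ⟨q₄, r₄, hr₄d, hq₄⟩ := DIV (t * r₃)
      have htd : DegLT ι t t m := by
        have h0 := degLT_monomial ι t (1 : S) 1 m (by omega)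
        simpa using h0
      have htm1d : DegLT ι t (t ^ (m - 1)) m := by
        have h0 := degLT_monomial ι t (1 : S) (m - 1) m (by omega)
        simpa using h0
      have htt : t * t ^ (m - 1) = t ^ m := by
        rw [← pow_succ']
        congr 1
        omega
      have e : r₂ = r₄ := hx t (t ^ (m - 1)) r₁ r₂ r₃ r₄ htd htm1d
        ⟨hr₁d, ι c, by rw [htt]; exact htm⟩ ⟨hr₂d, q₂, hq₂⟩ ⟨hr₃d, q₃, hq₃⟩ ⟨hr₄d, q₄, hq₄⟩
      have E1 : t ^ m * x = ι c * (f * x) + (q₂ * f + r₂) := by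
        rw [htm, add_mul, mul_assoc, ← hq₂]
      have E2 : t ^ m * x = (t * q₃ + q₄) * f + r₄ := by
        calc t ^ m * x = t * (t ^ (m - 1) * x) := by rw [← mul_assoc, htt]
        _ = t * (q₃ * f + r₃) := by rw [hq₃]
        _ = (t * q₃) * f + (q₄ * f + r₄) := by rw [mul_add, ← mul_assoc, ← hq₄]
        _ = (t * q₃ + q₄) * f + r₄ := by rw [add_mul]; abel
      have h5 : ι c * (f * x) + (q₂ * f + r₂) = (t * q₃ + q₄) * f + r₂ := by
        rw [← E1, E2, e]
      rw [← add_assoc] at h5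
      have h6 : ι c * (f * x) = (t * q₃ + q₄) * f - q₂ * f :=
        eq_sub_iff_add_eq.2 (add_right_cancel h5)
      have E3 : ι c * (f * x) = (t * q₃ + q₄ - q₂) * f := by rw [sub_mul]; exact h6
      have E4 : f * x = (ι (b m) * (t * q₃ + q₄ - q₂)) * f := by
        have h7 : ι (b m) * (ι c * (f * x)) = f * x := by
          rw [← mul_assoc, ← map_mul, hbc, map_one, one_mul]
        rw [← h7, E3, ← mul_assoc]
      exact ⟨_, E4⟩
    · rintro ⟨hxd, v, hfx⟩
      refine ⟨hxd, ?_⟩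
      rintro h k r₁ r₂ r₃ r₄ hh hk ⟨hr₁d, q₁, hq₁⟩ ⟨hr₂d, q₂, hq₂⟩ ⟨hr₃d, q₃, hq₃⟩ ⟨hr₄d, q₄, hq₄⟩
      have key : (q₁ * v + q₂) * f + r₂ = (h * q₃ + q₄) * f + r₄ := by
        calc (q₁ * v + q₂) * f + r₂ = q₁ * (v * f) + (q₂ * f + r₂) := by
              rw [add_mul, mul_assoc]; abel
        _ = q₁ * (f * x) + r₁ * x := by rw [← hfx, ← hq₂]
        _ = (q₁ * f + r₁) * x := by rw [add_mul, mul_assoc]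
        _ = (h * k) * x := by rw [← hq₁]
        _ = h * (k * x) := by rw [mul_assoc]
        _ = h * (q₃ * f + r₃) := by rw [hq₃]
        _ = (h * q₃) * f + (q₄ * f + r₄) := by rw [mul_add, ← mul_assoc, ← hq₄]
        _ = (h * q₃ + q₄) * f + r₄ := by rw [add_mul]; abel
      exact MU key hr₂d hr₄d

/-- Let `S` be a unital ring, `σ` an injective endomorphism, `f ∈ S[t;σ]` of
degree `m ≥ 2` with invertible leading coefficient.  If the Petit algebra `S_f` is not
associative, then `S ⊆ Nuc_l(S_f)`, `S ⊆ Nuc_m(S_f)`, and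
`Nuc_r(S_f) = {g ∈ S[t;σ] : deg g < m and f·g ∈ S[t;σ]f}`. -/
theorem petit_algebra_nuclei {S R : Type*} [Ring S] [Ring R]
    (σ : S →+* S) (hσ : Function.Injective σ)
    (ι : S →+* R) (hι : Function.Injective ι) (t : R)
    (hrel : ∀ a : S, t * ι a = ι (σ a) * t)
    (hbasis : ∀ g : R, ∃! a : ℕ →₀ S, g = a.sum fun i c => ι c * t ^ i)
    (f : R) (m : ℕ) (hm : 2 ≤ m) (b : ℕ → S)
    (hf : f = ∑ i ∈ range m, ι (b i) * t ^ i + ι (b m) * t ^ m) (hlead : IsUnit (b m))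
    (hnotassoc : ¬ (∀ g h k r₁ r₂ r₃ r₄ : R, DegLT ι t g m → DegLT ι t h m → DegLT ι t k m →
        PetitMulRel ι t f m g h r₁ → PetitMulRel ι t f m r₁ k r₂ →
        PetitMulRel ι t f m h k r₃ → PetitMulRel ι t f m g r₃ r₄ → r₂ = r₄)) :
    (∀ a : S, InNucL ι t f m (ι a)) ∧ (∀ a : S, InNucM ι t f m (ι a)) ∧
    (∀ x : R, InNucR ι t f m x ↔ (DegLT ι t x m ∧ ∃ v : R, f * x = v * f)) := by
  exact petit_algebra_nuclei' σ ι t hrel hbasis f m hm b hf hlead
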